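/- Let d ≥ 1 and let u ∈ ℓ²(ℤ^d) satisfy |Δ_d u_j| ≤ |V_j u_j| for all j ∈ ℤ^d, with ‖u‖_{ℓ²} ≤ A, |u_0| ≥ 1 (where u_0 is the value of u at the lattice point j = 0), and ‖V‖_∞ = sup_{j∈ℤ^d} |V_j| ≤ L. Then there exist R₀ = R₀(d, L, A) > 0 and c = c(d) > 0 such that for every R ≥ R₀, λ(R) := (Σ_{j∈ℤ^d, R−2 ≤ |j| ≤ R+1} |u_j|²)^{1/2} ≥ c e^{−c R log R}. -/

import Mathlib

set_option maxHeartbeats 1600000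

/-- Euclidean norm of a lattice point of `ℤ^d`. -/
noncomputable def latNorm {d : ℕ} (j : Fin d → ℤ) : ℝ :=
  Real.sqrt (∑ k, ((j k : ℝ)) ^ 2)

/-- Discrete Laplacian on `ℤ^d`:
`Δ_d f j = Σ_{k=1}^d (f (j+e_k) + f (j-e_k) - 2 f j)`. -/
noncomputable def discreteLap {d : ℕ} (f : (Fin d → ℤ) → ℂ) (j : Fin d → ℤ) : ℂ :=
  ∑ k, (f (j + Pi.single k 1) + f (j - Pi.single k 1) - 2 * f j)

/-- sup norm of a lattice point, as a natural number -/
def supN {d : ℕ} (x : Fin d → ℤ) : ℕ := Finset.univ.sup fun m => (x m).natAbs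

noncomputable def emb {d : ℕ} (x : Fin d → ℤ) : EuclideanSpace ℝ (Fin d) := WithLp.toLp 2 (fun k => (x k : ℝ))

lemma latNorm_eq_norm_emb {d : ℕ} (x : Fin d → ℤ) : latNorm x = ‖emb x‖ := by
  rw [EuclideanSpace.norm_eq, latNorm]
  congr 1
  apply Finset.sum_congr rfl
  intro k _
  simp [emb, Real.norm_eq_abs, sq_abs]

lemma emb_add {d : ℕ} (x y : Fin d → ℤ) : emb (x + y) = emb x + emb y := by
  ext k; simp only [emb, Pi.add_apply, Int.cast_add]; rfl

lemma norm_emb_single {d : ℕ} (m : Fin d) (t : ℤ) : ‖emb (Pi.single m t)‖ = |(t : ℝ)| := by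
  rw [EuclideanSpace.norm_eq]
  have : ∀ k, ‖emb (Pi.single m t) k‖ ^ 2 = Pi.single (M := fun _ => ℝ) m ((t:ℝ)^2) k := by
    intro k
    by_cases h : k = m
    · subst h; simp [emb, Real.norm_eq_abs, sq_abs]
    · simp [emb, Pi.single_eq_of_ne h, Real.norm_eq_abs]
  rw [Finset.sum_congr rfl (fun k _ => this k)]
  rw [Finset.sum_pi_single']
  simp [Real.sqrt_sq_eq_abs]

lemma latNorm_add_single_le {d : ℕ} (x : Fin d → ℤ) (m : Fin d) (t : ℤ) :
    latNorm (x + Pi.single m t) ≤ latNorm x + |(t : ℝ)| := by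
  rw [latNorm_eq_norm_emb, latNorm_eq_norm_emb, emb_add, ← norm_emb_single m t]
  exact norm_add_le _ _

lemma coord_le_latNorm {d : ℕ} (x : Fin d → ℤ) (k : Fin d) : |(x k : ℝ)| ≤ latNorm x := by
  rw [latNorm, ← Real.sqrt_sq_eq_abs]
  apply Real.sqrt_le_sqrt
  exact Finset.single_le_sum (f := fun m => ((x m : ℝ))^2) (fun m _ => sq_nonneg _)
    (Finset.mem_univ k)

lemma supN_le_latNorm {d : ℕ} (hd : 1 ≤ d) (x : Fin d → ℤ) : (supN x : ℝ) ≤ latNorm x := by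
  have : Nonempty (Fin d) := ⟨⟨0, hd⟩⟩
  obtain ⟨k, -, hk⟩ := Finset.exists_mem_eq_sup Finset.univ Finset.univ_nonempty
    (fun m => (x m).natAbs)
  rw [supN, hk]
  have h2 : (((x k).natAbs : ℕ) : ℝ) = |((x k : ℝ))| := by simp [Nat.cast_natAbs]
  rw [h2]
  exact coord_le_latNorm x k

lemma le_supN {d : ℕ} (x : Fin d → ℤ) (k : Fin d) : (x k).natAbs ≤ supN x := by
  unfold supN
  exact Finset.le_sup (f := fun m => (x m).natAbs) (Finset.mem_univ k)

lemma step_lemma {d : ℕ} (hd : 1 ≤ d) (u V : (Fin d → ℤ) → ℂ) (L : ℝ)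
    (h2 : ∀ j, ‖discreteLap u j‖ ≤ ‖V j * u j‖) (h5 : ∀ j, ‖V j‖ ≤ L)
    (p : Fin d → ℤ) :
    ∃ q : Fin d → ℤ, ‖u p‖ ≤ (L + 4 * d) * ‖u q‖ ∧
      supN p + 1 ≤ supN q ∧ latNorm q ≤ latNorm p + 2 := by
  have hL0 : 0 ≤ L := (norm_nonneg _).trans (h5 p)
  have hne : Nonempty (Fin d) := ⟨⟨0, hd⟩⟩
  obtain ⟨k, -, hk⟩ := Finset.exists_mem_eq_sup Finset.univ Finset.univ_nonempty
    (fun m => (p m).natAbs)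
  obtain ⟨s, hs_def⟩ : ∃ s : ℤ, s = if 0 ≤ p k then 1 else -1 := ⟨_, rfl⟩
  have hs : s = 1 ∨ s = -1 := by
    rw [hs_def]; split <;> simp
  obtain ⟨j, hj⟩ : ∃ j : Fin d → ℤ, j = p + Pi.single k s := ⟨_, rfl⟩
  have hpj : j - Pi.single k s = p := by rw [hj]; abel
  have hsingle_neg : Pi.single (M := fun _ : Fin d => ℤ) k (-(1:ℤ)) = -Pi.single k 1 := by
    funext m; by_cases h : m = k
    · subst h; simp
    · simp [Pi.single_eq_of_ne h]
  -- the candidate set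
  obtain ⟨G, hG⟩ : ∃ G : Finset (Fin d → ℤ), G =
    insert j (insert (j + Pi.single k s)
      (((Finset.univ.erase k).image (fun m => j + Pi.single m 1)) ∪
       ((Finset.univ.erase k).image (fun m => j - Pi.single m 1)))) := ⟨_, rfl⟩
  obtain ⟨q, hqG, hqmax⟩ := Finset.exists_max_image G (fun x => ‖u x‖)
    ⟨j, by simp [hG]⟩
  obtain ⟨M, hM⟩ : ∃ M : ℝ, M = ‖u q‖ := ⟨_, rfl⟩
  rw [← hM] at hqmax
  have hM0 : 0 ≤ M := hM ▸ norm_nonneg _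
  -- the equation at j
  have hsum : (∑ m, (u (j + Pi.single m 1) + u (j - Pi.single m 1)))
      = discreteLap u j + 2 * (d : ℂ) * u j := by
    rw [discreteLap, Finset.sum_sub_distrib, Finset.sum_const, Finset.card_univ,
      Fintype.card_fin]
    rw [nsmul_eq_mul]
    push_cast
    ring
  have hFk : u (j + Pi.single k 1) + u (j - Pi.single k 1)
      = u (j + Pi.single k s) + u p := by
    rcases hs with h | h
    · rw [h] at hpj ⊢; rw [hpj]
    · rw [h] at hpj ⊢
      rw [hsingle_neg] at hpj ⊢
      rw [sub_neg_eq_add] at hpj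
      rw [← sub_eq_add_neg, hpj, add_comm]
  have hsplit : (∑ m, (u (j + Pi.single m 1) + u (j - Pi.single m 1)))
      = (u (j + Pi.single k s) + u p) +
        ∑ m ∈ Finset.univ.erase k, (u (j + Pi.single m 1) + u (j - Pi.single m 1)) := by
    rw [← hFk]
    exact (Finset.add_sum_erase _ _ (Finset.mem_univ k)).symm
  have hup : u p = discreteLap u j + 2 * (d : ℂ) * u j - u (j + Pi.single k s)
      - ∑ m ∈ Finset.univ.erase k, (u (j + Pi.single m 1) + u (j - Pi.single m 1)) := by
    have h := hsum
    rw [hsplit] at h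
    linear_combination h
  -- norm bounds of each candidate by M
  have hle : ∀ g ∈ G, ‖u g‖ ≤ M := hqmax
  have hjG : j ∈ G := by simp [hG]
  have hjsG : j + Pi.single k s ∈ G := by simp [hG]
  have hmemp : ∀ m ∈ Finset.univ.erase k, j + Pi.single m 1 ∈ G := by
    intro m hm
    simp only [hG, Finset.mem_insert, Finset.mem_union, Finset.mem_image]
    right; right; left; exact ⟨m, hm, rfl⟩
  have hmemm : ∀ m ∈ Finset.univ.erase k, j - Pi.single m 1 ∈ G := by
    intro m hm
    simp only [hG, Finset.mem_insert, Finset.mem_union, Finset.mem_image]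
    right; right; right; exact ⟨m, hm, rfl⟩
  have hcard : ((Finset.univ.erase k).card : ℝ) = (d : ℝ) - 1 := by
    rw [Finset.card_erase_of_mem (Finset.mem_univ k), Finset.card_univ, Fintype.card_fin]
    have : (1:ℕ) ≤ d := hd
    push_cast [Nat.cast_sub this]
    ring
  have hnorm : ‖u p‖ ≤ (L + 4 * d) * M := by
    rw [hup]
    have b1 : ‖discreteLap u j‖ ≤ L * M := by
      calc ‖discreteLap u j‖ ≤ ‖V j * u j‖ := h2 j
        _ = ‖V j‖ * ‖u j‖ := norm_mul _ _
        _ ≤ L * M := mul_le_mul (h5 j) (hle j hjG) (norm_nonneg _) hL0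
    have b2 : ‖2 * (d : ℂ) * u j‖ ≤ 2 * d * M := by
      rw [norm_mul, norm_mul]
      simp only [Complex.norm_ofNat, Complex.norm_natCast]
      have h1 := hle j hjG
      have hdn : (0:ℝ) ≤ 2 * d := by positivity
      calc (2:ℝ) * d * ‖u j‖ ≤ 2 * d * M := mul_le_mul_of_nonneg_left h1 hdn
        _ = 2 * d * M := rfl
    have b3 : ‖u (j + Pi.single k s)‖ ≤ M := hle _ hjsG
    have b4 : ‖∑ m ∈ Finset.univ.erase k, (u (j + Pi.single m 1) + u (j - Pi.single m 1))‖
        ≤ (d - 1) * (2 * M) := by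
      calc ‖∑ m ∈ Finset.univ.erase k, (u (j + Pi.single m 1) + u (j - Pi.single m 1))‖
          ≤ ∑ m ∈ Finset.univ.erase k, ‖u (j + Pi.single m 1) + u (j - Pi.single m 1)‖ :=
            norm_sum_le _ _
        _ ≤ ∑ m ∈ Finset.univ.erase k, (2 * M) := by
            apply Finset.sum_le_sum
            intro m hm
            calc ‖u (j + Pi.single m 1) + u (j - Pi.single m 1)‖
                ≤ ‖u (j + Pi.single m 1)‖ + ‖u (j - Pi.single m 1)‖ := norm_add_le _ _
              _ ≤ M + M := add_le_add (hle _ (hmemp m hm)) (hle _ (hmemm m hm))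
              _ = 2 * M := by ring
        _ = (d - 1) * (2 * M) := by rw [Finset.sum_const, nsmul_eq_mul, hcard]
    have abs4 : ∀ a b c e : ℂ, ‖a + b - c - e‖ ≤ ‖a‖ + ‖b‖ + ‖c‖ + ‖e‖ := by
      intro a b c e
      calc ‖a + b - c - e‖ ≤ ‖a + b - c‖ + ‖e‖ := norm_sub_le _ _
        _ ≤ (‖a + b‖ + ‖c‖) + ‖e‖ := by
            have := norm_sub_le (a + b) c; linarith
        _ ≤ ‖a‖ + ‖b‖ + ‖c‖ + ‖e‖ := by
            have := norm_add_le a b; linarith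
    refine le_trans (abs4 _ _ _ _) ?_
    have hd1 : (1:ℝ) ≤ d := by exact_mod_cast hd
    nlinarith [b1, b2, b3, b4, hM0, hL0]
  -- now the properties of q
  have hsgn : (0 ≤ p k ∧ s = 1) ∨ (p k < 0 ∧ s = -1) := by
    by_cases h : 0 ≤ p k
    · exact Or.inl ⟨h, by rw [hs_def, if_pos h]⟩
    · exact Or.inr ⟨lt_of_not_ge h, by rw [hs_def, if_neg h]⟩
  have hneg : ∀ m : Fin d, Pi.single (M := fun _ : Fin d => ℤ) m (-(1:ℤ)) = -Pi.single m 1 := by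
    intro m; funext i; by_cases h : i = m
    · subst h; simp
    · simp [Pi.single_eq_of_ne h]
  have habs_s : |(s:ℝ)| = 1 := by rcases hs with h | h <;> rw [h] <;> norm_num
  have base : latNorm j ≤ latNorm p + 1 := by
    have h1 := latNorm_add_single_le p k s
    rw [habs_s] at h1
    rw [hj]; exact h1
  have hkey : ∀ g ∈ G, ((p k).natAbs + 1 ≤ (g k).natAbs) ∧ latNorm g ≤ latNorm p + 2 := by
    intro g hg
    rw [hG] at hg
    simp only [Finset.mem_insert, Finset.mem_union, Finset.mem_image,
      Finset.mem_erase, Finset.mem_univ, and_true] at hg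
    rcases hg with hq | hq | ⟨m, hm, rfl⟩ | ⟨m, hm, rfl⟩
    · rw [hq]
      constructor
      · have hjk : j k = p k + s := by rw [hj]; simp
        rw [hjk]; rcases hsgn with ⟨h1, h2⟩ | ⟨h1, h2⟩ <;> subst h2 <;> omega
      · linarith
    · rw [hq]
      constructor
      · have hjk : ((j + Pi.single k s : Fin d → ℤ)) k = p k + s + s := by rw [hj]; simp
        rw [hjk]; rcases hsgn with ⟨h1, h2⟩ | ⟨h1, h2⟩ <;> subst h2 <;> omega
      · have h1 := latNorm_add_single_le j k s
        rw [habs_s] at h1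
        linarith
    · constructor
      · have hjk : ((j + Pi.single m 1 : Fin d → ℤ)) k = p k + s := by
          rw [hj]; simp [Pi.single_eq_of_ne (Ne.symm hm)]
        rw [hjk]; rcases hsgn with ⟨h1, h2⟩ | ⟨h1, h2⟩ <;> subst h2 <;> omega
      · have h1 := latNorm_add_single_le j m 1
        norm_num at h1
        linarith
    · constructor
      · have hjk : ((j - Pi.single m 1 : Fin d → ℤ)) k = p k + s := by
          rw [hj]; simp [Pi.single_eq_of_ne (Ne.symm hm)]
        rw [hjk]; rcases hsgn with ⟨h1, h2⟩ | ⟨h1, h2⟩ <;> subst h2 <;> omega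
      · have h1 := latNorm_add_single_le j m (-1)
        norm_num at h1
        rw [hneg m, ← sub_eq_add_neg] at h1
        linarith
  obtain ⟨hq1, hq2⟩ := hkey q hqG
  refine ⟨q, hM ▸ hnorm, ?_, hq2⟩
  calc supN p + 1 = (p k).natAbs + 1 := by rw [supN, hk]
    _ ≤ (q k).natAbs := hq1
    _ ≤ supN q := le_supN q k

theorem lower_bound_stationary (d : ℕ) (hd : 1 ≤ d) :
    ∃ c : ℝ, 0 < c ∧
      ∀ A L : ℝ, ∃ R₀ : ℝ, 0 < R₀ ∧
        ∀ u V : (Fin d → ℤ) → ℂ,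
          Summable (fun j => ‖u j‖ ^ 2) →
          (∀ j, ‖discreteLap u j‖ ≤ ‖V j * u j‖) →
          Real.sqrt (∑' j : Fin d → ℤ, ‖u j‖ ^ 2) ≤ A →
          1 ≤ ‖u (0 : Fin d → ℤ)‖ →
          (∀ j, ‖V j‖ ≤ L) →
          ∀ R : ℝ, R₀ ≤ R →
            c * Real.exp (-c * R * Real.log R) ≤
              Real.sqrt (∑' j : Fin d → ℤ,
                if R - 2 ≤ latNorm j ∧ latNorm j ≤ R + 1 then ‖u j‖ ^ 2 else 0) := by
  classical
  refine ⟨1, one_pos, ?_⟩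
  intro A L
  refine ⟨|L| + 4 * d + 9, by positivity, ?_⟩
  intro u V h1 h2 h3 h4 h5 R hR
  have hL0 : 0 ≤ L := (norm_nonneg _).trans (h5 0)
  have habsL : |L| = L := abs_of_nonneg hL0
  set K : ℝ := L + 4 * d with hK
  have hd1 : (1:ℝ) ≤ d := by exact_mod_cast hd
  have hK1 : 1 ≤ K := by rw [hK]; linarith
  have hKR : K ≤ R := by rw [hK]; rw [habsL] at hR; linarith
  have hR3 : 3 ≤ R := by rw [habsL] at hR; linarith
  -- the chain
  choose f hf1 hf2 hf3 using step_lemma hd u V L h2 h5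
  set seq : ℕ → (Fin d → ℤ) := fun i => f^[i] 0 with hseq
  have hseq_succ : ∀ i, seq (i + 1) = f (seq i) := by
    intro i; rw [hseq]; exact Function.iterate_succ_apply' f i 0
  have h_low : ∀ i, 1 ≤ K ^ i * ‖u (seq i)‖ := by
    intro i
    induction i with
    | zero => simpa [hseq] using h4
    | succ n ih =>
      have hstep := hf1 (seq n)
      rw [← hseq_succ n] at hstep
      calc (1:ℝ) ≤ K ^ n * ‖u (seq n)‖ := ih
        _ ≤ K ^ n * (K * ‖u (seq (n+1))‖) :=
            mul_le_mul_of_nonneg_left hstep (by positivity)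
        _ = K ^ (n+1) * ‖u (seq (n+1))‖ := by ring
  have h_sup : ∀ i, i ≤ supN (seq i) := by
    intro i
    induction i with
    | zero => exact Nat.zero_le _
    | succ n ih =>
      have hstep := hf2 (seq n)
      rw [← hseq_succ n] at hstep
      omega
  have h_latlow : ∀ i : ℕ, (i : ℝ) ≤ latNorm (seq i) := by
    intro i
    calc (i : ℝ) ≤ (supN (seq i) : ℝ) := by exact_mod_cast h_sup i
      _ ≤ latNorm (seq i) := supN_le_latNorm hd _
  have h_latgrow : ∀ i, latNorm (seq (i + 1)) ≤ latNorm (seq i) + 2 := by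
    intro i
    have hstep := hf3 (seq i)
    rw [← hseq_succ i] at hstep
    exact hstep
  -- stopping time
  have hex : ∃ i : ℕ, R - 2 < latNorm (seq i) := by
    refine ⟨⌈R⌉₊, lt_of_lt_of_le ?_ (h_latlow ⌈R⌉₊)⟩
    have := Nat.le_ceil R
    linarith
  obtain ⟨N, hNdef⟩ : ∃ n : ℕ, n = Nat.find hex := ⟨_, rfl⟩
  have hspec : R - 2 < latNorm (seq N) := by rw [hNdef]; exact Nat.find_spec hex
  have hminN : ∀ m : ℕ, m < N → ¬(R - 2 < latNorm (seq m)) := by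
    intro m hm
    exact Nat.find_min hex (by omega)
  have hN0 : N ≠ 0 := by
    intro h
    rw [h] at hspec
    have : latNorm (seq 0) = 0 := by
      rw [hseq]
      simp [latNorm]
    rw [this] at hspec
    linarith
  obtain ⟨M, rfl⟩ : ∃ M, N = M + 1 := ⟨N - 1, by omega⟩
  have hmin : ¬(R - 2 < latNorm (seq M)) := hminN M (by omega)
  push_neg at hmin
  have hup : latNorm (seq (M + 1)) ≤ R + 1 := by
    have := h_latgrow M
    linarith
  have hMR : (M : ℝ) ≤ R - 2 := le_trans (h_latlow M) hmin
  have hNR : ((M + 1 : ℕ) : ℝ) ≤ R := by push_cast; linarith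
  -- the annulus sum bound
  set g : (Fin d → ℤ) → ℝ :=
    fun j => if R - 2 ≤ latNorm j ∧ latNorm j ≤ R + 1 then ‖u j‖ ^ 2 else 0 with hg
  have hgsum : Summable g := by
    apply Summable.of_nonneg_of_le _ _ h1
    · intro j; rw [hg]; dsimp only; split <;> positivity
    · intro j; rw [hg]; dsimp only; split
      · exact le_rfl
      · positivity
  have hterm : ‖u (seq (M + 1))‖ ^ 2 ≤ ∑' j, g j := by
    have h0 : g (seq (M + 1)) = ‖u (seq (M + 1))‖ ^ 2 := by
      rw [hg]; dsimp only; rw [if_pos ⟨le_of_lt hspec, hup⟩]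
    rw [← h0]
    exact Summable.le_tsum hgsum _ (fun j _ => by rw [hg]; dsimp only; split <;> positivity)
  have hsq : ‖u (seq (M + 1))‖ ≤ Real.sqrt (∑' j, g j) := by
    have := Real.sqrt_le_sqrt hterm
    rwa [Real.sqrt_sq (norm_nonneg _)] at this
  -- the exponential bound
  have hKN : K ^ (M + 1) ≤ Real.exp (R * Real.log R) := by
    have e1 : K ^ (M + 1) ≤ R ^ (M + 1) :=
      pow_le_pow_left₀ (by linarith) hKR _
    have hRpos : (0:ℝ) < R := by linarith
    have e2 : (R:ℝ) ^ (M + 1) = Real.exp (((M + 1 : ℕ) : ℝ) * Real.log R) := by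
      rw [← Real.log_pow, Real.exp_log (by positivity)]
    have hlogR : 0 ≤ Real.log R := Real.log_nonneg (by linarith)
    have e3 : Real.exp (((M + 1 : ℕ) : ℝ) * Real.log R) ≤ Real.exp (R * Real.log R) := by
      apply Real.exp_le_exp.mpr
      exact mul_le_mul_of_nonneg_right hNR hlogR
    calc K ^ (M + 1) ≤ R ^ (M + 1) := e1
      _ = Real.exp (((M + 1 : ℕ) : ℝ) * Real.log R) := e2
      _ ≤ Real.exp (R * Real.log R) := e3
  have hinv : (Real.exp (R * Real.log R))⁻¹ ≤ ‖u (seq (M + 1))‖ := by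
    have hE : (0:ℝ) < Real.exp (R * Real.log R) := Real.exp_pos _
    have h6 : 1 ≤ Real.exp (R * Real.log R) * ‖u (seq (M + 1))‖ := by
      calc (1:ℝ) ≤ K ^ (M + 1) * ‖u (seq (M + 1))‖ := h_low (M + 1)
        _ ≤ Real.exp (R * Real.log R) * ‖u (seq (M + 1))‖ :=
            mul_le_mul_of_nonneg_right hKN (norm_nonneg _)
    have h7 := mul_le_mul_of_nonneg_left h6 (inv_nonneg.mpr hE.le)
    rwa [mul_one, ← mul_assoc, inv_mul_cancel₀ hE.ne', one_mul] at h7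
  calc (1:ℝ) * Real.exp (-1 * R * Real.log R)
      = (Real.exp (R * Real.log R))⁻¹ := by
        rw [one_mul, ← Real.exp_neg]; ring_nf
    _ ≤ ‖u (seq (M + 1))‖ := hinv
    _ ≤ Real.sqrt (∑' j, g j) := hsq
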